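/- A prime p with p ≡ 1 (mod 6) can be represented as p = c² - cd + d² with c, d ∈ ℤ. -/
import Mathlib

/-- Multiplicativity of the Eisenstein norm form (via `(a+bζ)(c+dζ̄)`). -/
private lemma eisen_mul (a b c d : ℤ) :
    (a ^ 2 - a * b + b ^ 2) * (c ^ 2 - c * d + d ^ 2)
      = (a * c + b * d - a * d) ^ 2
        - (a * c + b * d - a * d) * (b * c - a * d) + (b * c - a * d) ^ 2 := by
  ring

private lemma eisen_nonneg (c d : ℤ) : 0 ≤ c ^ 2 - c * d + d ^ 2 := by
  nlinarith [sq_nonneg (c - d), sq_nonneg c, sq_nonneg d]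

/-- Euler-style descent for the form `x² - xy + y²`. -/
private lemma eisen_descent (p : ℕ) (hp : p.Prime) :
    ∀ m : ℕ, m ≠ 0 → m < p → (∃ a b : ℤ, a ^ 2 - a * b + b ^ 2 = m * p) →
      ∃ c d : ℤ, c ^ 2 - c * d + d ^ 2 = (p : ℤ) := by
  intro m
  induction m using Nat.strong_induction_on with
  | _ m ih =>
    rintro hm0 hmp ⟨a, b, hab⟩
    rcases eq_or_lt_of_le (Nat.one_le_iff_ne_zero.mpr hm0) with h1 | h2
    · exact ⟨a, b, by rw [hab, ← h1]; push_cast; ring⟩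
    -- now 2 ≤ m
    have hmpos : 0 < m := Nat.pos_of_ne_zero hm0
    have hmz : (0 : ℤ) < (m : ℤ) := by exact_mod_cast hmpos
    set c := Int.bmod a m with hc_def
    set d := Int.bmod b m with hd_def
    have hca : a ≡ c [ZMOD m] := by
      show a % (m : ℤ) = c % (m : ℤ)
      rw [hc_def, Int.bmod_emod]
    have hdb : b ≡ d [ZMOD m] := by
      show b % (m : ℤ) = d % (m : ℤ)
      rw [hd_def, Int.bmod_emod]
    have habd : (m : ℤ) ∣ a ^ 2 - a * b + b ^ 2 := ⟨p, hab⟩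
    have hcong : a ^ 2 - a * b + b ^ 2 ≡ c ^ 2 - c * d + d ^ 2 [ZMOD m] :=
      ((hca.pow 2).sub (hca.mul hdb)).add (hdb.pow 2)
    have hdvd : (m : ℤ) ∣ c ^ 2 - c * d + d ^ 2 := by
      have h1 := hcong.dvd
      have := dvd_add h1 habd
      simpa using this
    -- bounds on c, d
    have hc_ub : 2 * c ≤ (m : ℤ) - 1 := by
      have h := Int.bmod_lt (x := a) hmpos
      omega
    have hc_lb : -(m : ℤ) ≤ 2 * c := by
      have h := Int.le_bmod (x := a) hmpos
      omega
    have hd_ub : 2 * d ≤ (m : ℤ) - 1 := by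
      have h := Int.bmod_lt (x := b) hmpos
      omega
    have hd_lb : -(m : ℤ) ≤ 2 * d := by
      have h := Int.le_bmod (x := b) hmpos
      omega
    have hsmall : c ^ 2 - c * d + d ^ 2 < (m : ℤ) * m := by
      nlinarith [sq_nonneg (2 * c + 2 * d), sq_nonneg (2 * c - 2 * d),
        mul_self_nonneg ((m : ℤ) - 2 * c), mul_self_nonneg ((m : ℤ) + 2 * c),
        mul_self_nonneg ((m : ℤ) - 2 * d), mul_self_nonneg ((m : ℤ) + 2 * d)]
    obtain ⟨r, hr⟩ := hdvd
    have hr_nonneg : 0 ≤ r := by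
      have := eisen_nonneg c d
      nlinarith
    have hr_lt : r < (m : ℤ) := by nlinarith
    rcases eq_or_lt_of_le hr_nonneg with hr0 | hrpos
    · -- r = 0 : c = d = 0, so m ∣ a, m ∣ b, contradiction with primality
      exfalso
      have hN0 : c ^ 2 - c * d + d ^ 2 = 0 := by rw [hr, ← hr0, mul_zero]
      have hd2 : d ^ 2 = 0 := by
        have h1 : d ^ 2 ≤ 0 := by nlinarith [sq_nonneg (2 * c - d)]
        exact le_antisymm h1 (sq_nonneg d)
      have hd0 : d = 0 := pow_eq_zero_iff (by norm_num) |>.mp hd2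
      have hc2 : c ^ 2 = 0 := by
        have h1 : c ^ 2 ≤ 0 := by nlinarith [hd0]
        exact le_antisymm h1 (sq_nonneg c)
      have hc0 : c = 0 := pow_eq_zero_iff (by norm_num) |>.mp hc2
      have hma : (m : ℤ) ∣ a := by
        have := hca.dvd
        simpa [hc0] using this
      have hmb : (m : ℤ) ∣ b := by
        have := hdb.dvd
        simpa [hd0] using this
      obtain ⟨a', ha'⟩ := hma
      obtain ⟨b', hb'⟩ := hmb
      have hmp' : (m : ℤ) * (m * (a' ^ 2 - a' * b' + b' ^ 2)) = m * p := by
        rw [← hab, ha', hb']; ring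
      have : (m : ℤ) * (a' ^ 2 - a' * b' + b' ^ 2) = p :=
        mul_left_cancel₀ (ne_of_gt hmz) hmp'
      have hmdvd : (m : ℤ) ∣ (p : ℤ) := ⟨_, this.symm⟩
      have hmdvdn : m ∣ p := by exact_mod_cast Int.ofNat_dvd.mp (by exact_mod_cast hmdvd)
      rcases (hp.eq_one_or_self_of_dvd m hmdvdn) with h | h
      · omega
      · omega
    · -- r > 0 : descend
      set e := a * c + b * d - a * d with he_def
      set f := b * c - a * d with hf_def
      have hme : (m : ℤ) ∣ e := by
        have h1 : e ≡ a * a + b * b - a * b [ZMOD m] := by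
          calc e = c * a + d * b - a * d := by ring
            _ ≡ a * a + b * b - a * b [ZMOD m] := by
                exact ((hca.symm.mul_right a).add (hdb.symm.mul_right b)).sub
                  (hdb.symm.mul_left a)
        have h2 : (m : ℤ) ∣ a * a + b * b - a * b := by
          have : a * a + b * b - a * b = a ^ 2 - a * b + b ^ 2 := by ring
          rw [this]; exact habd
        have h3 := dvd_sub h2 h1.dvd
        simpa using h3
      have hmf : (m : ℤ) ∣ f := by
        have h1 : f ≡ b * a - a * b [ZMOD m] := by
          calc f = b * c - a * d := rfl
            _ ≡ b * a - a * b [ZMOD m] := (hca.symm.mul_left b).sub (hdb.symm.mul_left a)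
        have h3 := h1.dvd
        have h4 : b * a - a * b - f = -f := by ring
        rw [h4] at h3
        exact dvd_neg.mp h3
      obtain ⟨e', he'⟩ := hme
      obtain ⟨f', hf'⟩ := hmf
      have hkey : (m : ℤ) * (m * (e' ^ 2 - e' * f' + f' ^ 2)) = m * (m * (r * p)) := by
        have := eisen_mul a b c d
        rw [hab, hr] at this
        rw [← he_def, ← hf_def, he', hf'] at this
        linear_combination (-1 : ℤ) * this
      have hrp : e' ^ 2 - e' * f' + f' ^ 2 = r * p := by
        have := mul_left_cancel₀ (ne_of_gt hmz) hkey
        exact mul_left_cancel₀ (ne_of_gt hmz) this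
      have hrn : r.toNat ≠ 0 := by omega
      have hrm : r.toNat < m := by omega
      have hrp' : r.toNat < p := by omega
      refine ih r.toNat hrm hrn hrp' ⟨e', f', ?_⟩
      rw [hrp]
      congr 1
      omega

/-- A prime p ≡ 1 (mod 6) is represented by the norm form c² - cd + d². -/
theorem prime_one_mod_six_rep (p : ℕ) (hp : p.Prime) (h : p % 6 = 1) :
    ∃ c d : ℤ, c ^ 2 - c * d + d ^ 2 = (p : ℤ) := by
  haveI : Fact p.Prime := ⟨hp⟩
  have hp2 : 2 ≤ p := hp.two_le
  have hp7 : 7 ≤ p := by omega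
  -- 3 divides p - 1
  have h3 : 3 ∣ Fintype.card (ZMod p)ˣ := by
    rw [ZMod.card_units_eq_totient, Nat.totient_prime hp]
    omega
  haveI : Fact (Nat.Prime 3) := ⟨by norm_num⟩
  obtain ⟨u, hu⟩ := exists_prime_orderOf_dvd_card 3 h3
  set g : ZMod p := ↑u with hg_def
  have hg3 : g ^ 3 = 1 := by
    have : u ^ 3 = 1 := by rw [← hu]; exact pow_orderOf_eq_one u
    have := congrArg (Units.val) this
    simpa [hg_def] using this
  have hg1 : g ≠ 1 := by
    intro hgeq
    have : u = 1 := Units.ext (by simpa [hg_def] using hgeq)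
    rw [this] at hu
    simp at hu
  have hsum : g ^ 2 + g + 1 = 0 := by
    have hfac : (g - 1) * (g ^ 2 + g + 1) = 0 := by
      have : g ^ 3 - 1 = 0 := by rw [hg3]; ring
      calc (g - 1) * (g ^ 2 + g + 1) = g ^ 3 - 1 := by ring
        _ = 0 := this
    rcases mul_eq_zero.mp hfac with h' | h'
    · exact absurd (by linear_combination h' : g = 1) hg1
    · exact h'
  -- a := val of -g satisfies a² - a + 1 ≡ 0 mod p
  set ω : ZMod p := -g with hω_def
  set a : ℤ := (ω.val : ℤ) with ha_def
  have haω : ((a : ℤ) : ZMod p) = ω := by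
    rw [ha_def]
    push_cast
    exact ZMod.natCast_val ω |>.trans (ZMod.cast_id _ _)
  have hdvd : (p : ℤ) ∣ a ^ 2 - a * 1 + 1 ^ 2 := by
    rw [← ZMod.intCast_zmod_eq_zero_iff_dvd]
    push_cast
    rw [haω, hω_def]
    linear_combination hsum
  have ha_lb : 0 ≤ a := by positivity
  have ha_ub : a ≤ (p : ℤ) - 1 := by
    have := ZMod.val_lt ω
    omega
  obtain ⟨k, hk⟩ := hdvd
  have hk_pos : 0 < k := by nlinarith [sq_nonneg (2 * a - 1)]
  have hk_lt : k < (p : ℤ) := by nlinarith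
  have hppos : (0 : ℤ) < p := by exact_mod_cast hp.pos
  refine eisen_descent p hp k.toNat (by omega) (by omega) ⟨a, 1, ?_⟩
  rw [hk]
  have : ((k.toNat : ℕ) : ℤ) = k := by omega
  rw [this]; ring
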